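/- arXiv:1505.04829 — 5 statements merged into one kernel-verified Lean document; each statement's English description precedes it below -/
import Mathlib

section
/- Let p : ℤ → ℝ be a probability mass function that is symmetric (p_e = p_{−e}) and unimodal (p_e ≥ p_{e+1} for all e ≥ 0), let d : ℤ → ℝ be bounded, even, with d(0) = 0 and nondecreasing on nonnegative integers (d(e₁) ≥ d(e₂) for e₁ > e₂ > 0), and fix a ∈ ℤ_{>0}, λ > 0, β ∈ (0,1) and a horizon T. Define V_{T+1} ≡ 0 and, for t = T,…,1, V_t(e) = min{ (1−β)λ + β Σ_{n∈ℤ} p_n V_{t+1}(n), (1−β)d(e) + β Σ_{n∈ℤ} p_{n−ae} V_{t+1}(n) }. Then every V_t is even and nondecreasing on ℤ_{≥0}: V_t(e) = V_t(−e) and V_t(e) ≤ V_t(e+1) for all e ≥ 0. -/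
/-- for symmetric unimodal innovations and even monotone distortion, the
finite-horizon value functions are even and nondecreasing on the nonnegative integers. -/
theorem stmt_5 (p : ℤ → ℝ) (hp_nonneg : ∀ n, 0 ≤ p n) (hp_sum : HasSum p 1)
    (hp_sym : ∀ e : ℤ, p (-e) = p e)
    (hp_unimodal : ∀ e : ℤ, 0 ≤ e → p (e + 1) ≤ p e)
    (d : ℤ → ℝ) (hd_bdd : ∃ C, ∀ e, |d e| ≤ C) (hd_even : ∀ e : ℤ, d (-e) = d e)
    (hd0 : d 0 = 0)
    (hd_mono : ∀ e₁ e₂ : ℤ, 0 ≤ e₂ → e₂ ≤ e₁ → d e₂ ≤ d e₁)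
    (a : ℤ) (ha : 0 < a) (lam : ℝ) (hlam : 0 < lam) (β : ℝ) (hβ : β ∈ Set.Ioo (0 : ℝ) 1)
    (T : ℕ) (V : ℕ → ℤ → ℝ)
    (hVT : ∀ e, V (T + 1) e = 0)
    (hV : ∀ t, 1 ≤ t → t ≤ T → ∀ e, V t e =
      min ((1 - β) * lam + β * ∑' n : ℤ, p n * V (t + 1) n)
          ((1 - β) * d e + β * ∑' n : ℤ, p (n - a * e) * V (t + 1) n)) :
    ∀ t, 1 ≤ t → t ≤ T + 1 →
      (∀ e : ℤ, V t e = V t (-e)) ∧ (∀ e : ℤ, 0 ≤ e → V t e ≤ V t (e + 1)) := by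
  obtain ⟨hβ0, hβ1⟩ := hβ
  have hβ0' : (0:ℝ) ≤ β := le_of_lt hβ0
  have h1β : (0:ℝ) ≤ 1 - β := by linarith
  have hp_summable : Summable p := hp_sum.summable
  -- p depends only on |·| and is nonincreasing there
  have hp_abs : ∀ x : ℤ, p x = p |x| := by
    intro x
    rcases abs_choice x with h | h
    · rw [h]
    · rw [h, hp_sym]
  have hp_mono : ∀ s t : ℤ, 0 ≤ s → s ≤ t → p t ≤ p s := by
    intro s t hs hst
    exact Int.le_induction (motive := fun u _ => p u ≤ p s) (le_refl _)
      (fun n hn ih => le_trans (hp_unimodal n (hs.trans hn)) ih) t hst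
  have hp_mono' : ∀ s t : ℤ, |s| ≤ t → p t ≤ p s := by
    intro s t h
    rw [hp_abs s]
    exact hp_mono _ _ (abs_nonneg s) h
  -- shifted p sums
  have hp_shift : ∀ c : ℤ, HasSum (fun n => p (n - c)) 1 := by
    intro c
    have := (Equiv.subRight c).hasSum_iff (f := p) (a := 1)
    exact this.mpr hp_sum
  have key_summable : ∀ (c : ℤ) (f : ℤ → ℝ) (C : ℝ), (∀ e, |f e| ≤ C) →
      Summable (fun n => p (n - c) * f n) := by
    intro c f C hC
    apply Summable.of_norm_bounded (g := fun n => p (n - c) * C) (((hp_shift c).summable).mul_right C)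
    intro n
    rw [Real.norm_eq_abs, abs_mul, abs_of_nonneg (hp_nonneg _)]
    exact mul_le_mul_of_nonneg_left (hC n) (hp_nonneg _)
  -- change of variables n ↦ n + c
  have tsum_shift : ∀ (c : ℤ) (f : ℤ → ℝ),
      (∑' n : ℤ, p (n - c) * f n) = ∑' m : ℤ, p m * f (m + c) := by
    intro c f
    rw [← (Equiv.addRight c).tsum_eq (fun n => p (n - c) * f n)]
    apply tsum_congr
    intro m
    simp [Equiv.coe_addRight]
  -- evenness of the convolution
  have tsum_neg : ∀ (c : ℤ) (f : ℤ → ℝ), (∀ n, f (-n) = f n) →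
      (∑' n : ℤ, p (n - c) * f n) = ∑' n : ℤ, p (n + c) * f n := by
    intro c f hf
    rw [← (Equiv.neg ℤ).tsum_eq (fun n => p (n - c) * f n)]
    apply tsum_congr
    intro n
    simp only [Equiv.neg_apply]
    rw [show (-n - c) = -(n + c) by ring, hp_sym, hf]
  -- bound on the convolution
  have tsum_bound : ∀ (c : ℤ) (f : ℤ → ℝ) (C : ℝ), (∀ e, |f e| ≤ C) →
      |∑' n : ℤ, p (n - c) * f n| ≤ C := by
    intro c f C hC
    have hle : ∀ n : ℤ, |p (n - c) * f n| ≤ p (n - c) * C := by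
      intro n
      rw [abs_mul, abs_of_nonneg (hp_nonneg _)]
      exact mul_le_mul_of_nonneg_left (hC n) (hp_nonneg _)
    have habs : Summable (fun n : ℤ => |p (n - c) * f n|) :=
      ((hp_shift c).summable.mul_right C).of_nonneg_of_le (fun n => abs_nonneg _) hle
    have h1 : |∑' n : ℤ, p (n - c) * f n| ≤ ∑' n : ℤ, |p (n - c) * f n| := by
      simpa only [Real.norm_eq_abs] using norm_tsum_le_tsum_norm
        (f := fun n : ℤ => p (n - c) * f n) (by simpa only [Real.norm_eq_abs] using habs)
    have h2 : (∑' n : ℤ, |p (n - c) * f n|) ≤ ∑' n : ℤ, p (n - c) * C :=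
      Summable.tsum_le_tsum hle habs ((hp_shift c).summable.mul_right C)
    have h3 : (∑' n : ℤ, p (n - c) * C) = C := by
      rw [((hp_shift c).mul_right C).tsum_eq, one_mul]
    linarith
  -- one-step monotonicity of the convolution in the shift
  have step : ∀ (c : ℤ), 0 ≤ c → ∀ (f : ℤ → ℝ) (C : ℝ), (∀ e, |f e| ≤ C) →
      (∀ n, f (-n) = f n) → (∀ e : ℤ, 0 ≤ e → f e ≤ f (e + 1)) →
      (∑' n : ℤ, p (n - c) * f n) ≤ ∑' n : ℤ, p (n - (c + 1)) * f n := by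
    intro c hc f C hC hfe hfm
    rw [tsum_shift c f, tsum_shift (c + 1) f]
    have hb1 : ∀ e, |f (e + c)| ≤ C := fun e => hC _
    have hb2 : ∀ e, |f (e + (c + 1))| ≤ C := fun e => hC _
    have hs1 : Summable (fun m : ℤ => p m * f (m + c)) := by
      have := key_summable 0 (fun n => f (n + c)) C hb1
      simpa using this
    have hs2 : Summable (fun m : ℤ => p m * f (m + (c + 1))) := by
      have := key_summable 0 (fun n => f (n + (c + 1))) C hb2
      simpa using this
    rw [← sub_nonneg, ← Summable.tsum_sub hs2 hs1]
    have hrw : ∀ m : ℤ, p m * f (m + (c + 1)) - p m * f (m + c)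
        = p m * (f (m + c + 1) - f (m + c)) := by
      intro m
      rw [show m + (c + 1) = m + c + 1 by ring]
      ring
    rw [tsum_congr hrw]
    -- substitute m = j - c
    set g : ℤ → ℝ := fun m => p m * (f (m + c + 1) - f (m + c)) with hg
    have hsub : (∑' m : ℤ, g m) = ∑' j : ℤ, p (j - c) * (f (j + 1) - f j) := by
      rw [← (Equiv.subRight c).tsum_eq g]
      apply tsum_congr
      intro j
      simp only [hg, Equiv.subRight_apply]
      rw [show j - c + c + 1 = j + 1 by ring, show j - c + c = j by ring]
    rw [hsub]
    set h : ℤ → ℝ := fun j => p (j - c) * (f (j + 1) - f j) with hh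
    have hsumh : Summable h := by
      have h1 : Summable (fun j : ℤ => p (j - c) * f (j + 1)) :=
        key_summable c (fun j => f (j + 1)) C (fun j => hC _)
      have h2 : Summable (fun j : ℤ => p (j - c) * f j) := key_summable c f C hC
      have := h1.sub h2
      apply this.congr
      intro j
      simp [hh]
      ring
    have hsN : Summable (fun k : ℕ => h (k : ℤ)) :=
      hsumh.comp_injective (fun x y hxy => by exact_mod_cast hxy)
    have hsM : Summable (fun k : ℕ => h (-((k : ℤ) + 1))) := by
      apply hsumh.comp_injective
      intro x y hxy
      simp only at hxy
      omega
    rw [tsum_of_nat_of_neg_add_one hsN hsM, ← Summable.tsum_add hsN hsM]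
    apply tsum_nonneg
    intro k
    have hk0 : (0:ℤ) ≤ (k:ℤ) := Int.ofNat_nonneg k
    have e1 : h (k:ℤ) = p ((k:ℤ) - c) * (f ((k:ℤ) + 1) - f (k:ℤ)) := rfl
    have e2 : h (-((k:ℤ) + 1)) = p ((k:ℤ) + 1 + c) * (f (k:ℤ) - f ((k:ℤ) + 1)) := by
      simp only [hh]
      rw [show -((k:ℤ) + 1) - c = -((k:ℤ) + 1 + c) by ring, hp_sym,
        show -((k:ℤ) + 1) + 1 = -(k:ℤ) by ring, hfe,
        show f (-((k:ℤ) + 1)) = f ((k:ℤ) + 1) from hfe _]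
    rw [e1, e2]
    have hmono : f (k:ℤ) ≤ f ((k:ℤ) + 1) := hfm _ hk0
    have hpc : p ((k:ℤ) + 1 + c) ≤ p ((k:ℤ) - c) := by
      apply hp_mono'
      rw [abs_sub_le_iff]
      constructor <;> linarith
    nlinarith [hp_nonneg ((k:ℤ) + 1 + c), hp_nonneg ((k:ℤ) - c)]
  -- iterated monotonicity
  have steps : ∀ (c₁ : ℤ), 0 ≤ c₁ → ∀ (c₂ : ℤ), c₁ ≤ c₂ →
      ∀ (f : ℤ → ℝ) (C : ℝ), (∀ e, |f e| ≤ C) →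
      (∀ n, f (-n) = f n) → (∀ e : ℤ, 0 ≤ e → f e ≤ f (e + 1)) →
      (∑' n : ℤ, p (n - c₁) * f n) ≤ ∑' n : ℤ, p (n - c₂) * f n := by
    intro c₁ hc₁ c₂ hc₂ f C hC hfe hfm
    exact Int.le_induction
      (motive := fun c _ => (∑' n : ℤ, p (n - c₁) * f n) ≤ ∑' n : ℤ, p (n - c) * f n)
      (le_refl _)
      (fun m hm ih => le_trans ih (step m (hc₁.trans hm) f C hC hfe hfm)) c₂ hc₂
  -- main downward induction
  obtain ⟨Cd, hCd⟩ := hd_bdd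
  have hCd0 : 0 ≤ Cd := le_trans (abs_nonneg _) (hCd 0)
  have main : ∀ k : ℕ, k ≤ T →
      (∀ e : ℤ, V (T + 1 - k) e = V (T + 1 - k) (-e)) ∧
      (∀ e : ℤ, 0 ≤ e → V (T + 1 - k) e ≤ V (T + 1 - k) (e + 1)) ∧
      ∃ C, 0 ≤ C ∧ ∀ e, |V (T + 1 - k) e| ≤ C := by
    intro k
    induction k with
    | zero =>
      intro _
      simp only [Nat.sub_zero]
      exact ⟨fun e => by rw [hVT, hVT], fun e _ => by rw [hVT, hVT],
        ⟨0, le_refl _, fun e => by rw [hVT]; simp⟩⟩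
    | succ k ih =>
      intro hk
      have hk' : k ≤ T := Nat.le_of_succ_le hk
      obtain ⟨ihe, ihm, C, hC0, ihC⟩ := ih hk'
      have ht1 : 1 ≤ T + 1 - (k + 1) := by omega
      have ht2 : T + 1 - (k + 1) ≤ T := by omega
      have htsucc : T + 1 - (k + 1) + 1 = T + 1 - k := by omega
      set t := T + 1 - (k + 1) with htdef
      set W : ℤ → ℝ := V (T + 1 - k) with hW
      have hWe : ∀ n : ℤ, W (-n) = W n := fun n => (ihe n).symm
      have hWm : ∀ e : ℤ, 0 ≤ e → W e ≤ W (e + 1) := ihm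
      have hWC : ∀ e, |W e| ≤ C := ihC
      have hVt : ∀ e, V t e =
          min ((1 - β) * lam + β * ∑' n : ℤ, p n * W n)
              ((1 - β) * d e + β * ∑' n : ℤ, p (n - a * e) * W n) := by
        intro e
        rw [hV t ht1 ht2 e, htsucc]
      refine ⟨?_, ?_, ?_⟩
      · -- evenness
        intro e
        rw [hVt e, hVt (-e)]
        congr 1
        rw [hd_even]
        congr 1
        have : (∑' n : ℤ, p (n - a * (-e)) * W n) = ∑' n : ℤ, p (n + a * e) * W n := by
          apply tsum_congr
          intro n
          rw [show n - a * (-e) = n + a * e by ring]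
        rw [this, ← tsum_neg (a * e) W hWe]
      · -- monotonicity
        intro e he
        rw [hVt e, hVt (e + 1)]
        apply min_le_min (le_refl _)
        apply add_le_add
        · exact mul_le_mul_of_nonneg_left (hd_mono (e + 1) e he (by linarith)) h1β
        · apply mul_le_mul_of_nonneg_left _ hβ0'
          have hae : 0 ≤ a * e := mul_nonneg (le_of_lt ha) he
          have := steps (a * e) hae (a * (e + 1)) (by nlinarith) W C hWC hWe hWm
          exact this
      · -- boundedness
        refine ⟨|(1 - β) * lam + β * ∑' n : ℤ, p n * W n| + ((1 - β) * Cd + β * C),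
          by positivity, ?_⟩
        intro e
        rw [hVt e]
        set A := (1 - β) * lam + β * ∑' n : ℤ, p n * W n with hA
        set B := (1 - β) * d e + β * ∑' n : ℤ, p (n - a * e) * W n with hB
        have hBbound : |B| ≤ (1 - β) * Cd + β * C := by
          rw [hB]
          calc |(1 - β) * d e + β * ∑' n : ℤ, p (n - a * e) * W n|
              ≤ |(1 - β) * d e| + |β * ∑' n : ℤ, p (n - a * e) * W n| := abs_add_le _ _
            _ ≤ (1 - β) * Cd + β * C := by
                apply add_le_add
                · rw [abs_mul, abs_of_nonneg h1β]
                  exact mul_le_mul_of_nonneg_left (hCd e) h1β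
                · rw [abs_mul, abs_of_nonneg hβ0']
                  exact mul_le_mul_of_nonneg_left (tsum_bound (a * e) W C hWC) hβ0'
        rcases min_choice A B with h | h
        · rw [h]
          have : (0:ℝ) ≤ (1 - β) * Cd + β * C := by positivity
          linarith [abs_nonneg A]
        · rw [h]
          linarith [abs_nonneg A, hBbound]
  intro t h1 h2
  obtain ⟨he, hm, -⟩ := main (T + 1 - t) (by omega)
  have ht : T + 1 - (T + 1 - t) = t := by omega
  rw [ht] at he hm
  exact ⟨he, hm⟩
end

section
/- Let p : ℤ → ℝ be a probability mass function that is symmetric (p_e = p_{−e}) and unimodal (p_e ≥ p_{e+1} for all e ≥ 0), let d : ℤ → ℝ be bounded, even, with d(0) = 0 and nondecreasing on nonnegative integers, and fix a ∈ ℤ, λ > 0, β ∈ (0,1). Let V_β(·;λ) be the unique bounded fixed point of the Bellman operator (TV)(e) = min{ (1−β)λ + β Σ_{w∈ℤ} p_w V(w), (1−β)d(e) + β Σ_{w∈ℤ} p_w V(ae+w) }. Then V_β(·;λ) is even and nondecreasing on ℤ_{≥0} (V_β(e;λ) = V_β(−e;λ) and V_β(e;λ) ≤ V_β(e+1;λ)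 for e ≥ 0); moreover, the fixed points obtained for parameter a and for parameter −a coincide. -/
namespace StRe6

private lemma p_mono {p : ℤ → ℝ} (hp_uni : ∀ e : ℤ, 0 ≤ e → p (e + 1) ≤ p e) :
    ∀ s t : ℤ, 0 ≤ s → s ≤ t → p t ≤ p s := by
  intro s t hs hst
  exact Int.le_induction (motive := fun t _ => p t ≤ p s) (le_refl _)
    (fun t ht ih => le_trans (hp_uni t (le_trans hs ht)) ih) t hst

private lemma p_abs {p : ℤ → ℝ} (hp_sym : ∀ e : ℤ, p (-e) = p e) (u : ℤ) :
    p u = p |u| := by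
  rcases abs_choice u with h | h
  · rw [h]
  · rw [h, hp_sym]

private lemma summ {p : ℤ → ℝ} (hp_nonneg : ∀ n, 0 ≤ p n) (hp_sum : HasSum p 1)
    {f : ℤ → ℝ} {C : ℝ} (hf : ∀ e, |f e| ≤ C) (σ : ℤ → ℤ) :
    Summable fun w => p w * f (σ w) := by
  have hp : Summable p := ⟨1, hp_sum⟩
  apply Summable.of_abs
  apply Summable.of_nonneg_of_le (fun w => abs_nonneg _) (fun w => ?_) (hp.mul_right C)
  rw [abs_mul, abs_of_nonneg (hp_nonneg w)]
  exact mul_le_mul_of_nonneg_left (hf _) (hp_nonneg w)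

private lemma abs_tsum {f : ℤ → ℝ} (h : Summable fun w => |f w|) :
    |∑' w : ℤ, f w| ≤ ∑' w : ℤ, |f w| := by
  rw [← Real.norm_eq_abs]
  refine le_trans (norm_tsum_le_tsum_norm ?_) ?_
  · simpa [Real.norm_eq_abs] using h
  · simp [Real.norm_eq_abs]

private lemma tsum_bound {p : ℤ → ℝ} (hp_nonneg : ∀ n, 0 ≤ p n) (hp_sum : HasSum p 1)
    {f : ℤ → ℝ} {C : ℝ} (hf : ∀ e, |f e| ≤ C) (σ : ℤ → ℤ) :
    |∑' w : ℤ, p w * f (σ w)| ≤ C := by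
  have hp : Summable p := ⟨1, hp_sum⟩
  have hs := summ hp_nonneg hp_sum hf σ
  calc |∑' w : ℤ, p w * f (σ w)| ≤ ∑' w : ℤ, |p w * f (σ w)| := abs_tsum hs.abs
    _ ≤ ∑' w : ℤ, p w * C := by
        apply Summable.tsum_le_tsum (fun w => ?_) hs.abs (hp.mul_right C)
        rw [abs_mul, abs_of_nonneg (hp_nonneg w)]
        exact mul_le_mul_of_nonneg_left (hf _) (hp_nonneg w)
    _ = C := by rw [tsum_mul_right, hp_sum.tsum_eq, one_mul]

private lemma tsum_diff {p : ℤ → ℝ} (hp_nonneg : ∀ n, 0 ≤ p n) (hp_sum : HasSum p 1)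
    {f g : ℤ → ℝ} {Cf Cg M : ℝ} (hf : ∀ e, |f e| ≤ Cf) (hg : ∀ e, |g e| ≤ Cg)
    (hM : ∀ w, |f w - g w| ≤ M) (σ : ℤ → ℤ) :
    |(∑' w : ℤ, p w * f (σ w)) - ∑' w : ℤ, p w * g (σ w)| ≤ M := by
  have h1 : (∑' w : ℤ, p w * f (σ w)) - ∑' w : ℤ, p w * g (σ w)
      = ∑' w : ℤ, p w * ((fun u => f u - g u) (σ w)) := by
    rw [← Summable.tsum_sub (summ hp_nonneg hp_sum hf σ) (summ hp_nonneg hp_sum hg σ)]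
    exact tsum_congr (fun w => by show _ = p w * (f (σ w) - g (σ w)); ring)
  rw [h1]
  exact tsum_bound hp_nonneg hp_sum hM σ

private lemma neg_reindex (F : ℤ → ℝ) : ∑' w : ℤ, F (-w) = ∑' w : ℤ, F w :=
  (Equiv.neg ℤ).tsum_eq F

private lemma sum_neg {p : ℤ → ℝ} (hp_sym : ∀ e : ℤ, p (-e) = p e) (F : ℤ → ℝ) :
    ∑' w : ℤ, p w * F (-w) = ∑' w : ℤ, p w * F w := by
  calc ∑' w : ℤ, p w * F (-w) = ∑' w : ℤ, (fun u => p (-u) * F u) (-w) :=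
        tsum_congr (fun w => by show _ = p (- -w) * F (-w); rw [neg_neg])
    _ = ∑' u : ℤ, (fun u => p (-u) * F u) u := neg_reindex (fun u => p (-u) * F u)
    _ = ∑' u : ℤ, p u * F u := tsum_congr (fun u => by show p (-u) * F u = _; rw [hp_sym])

private lemma conv_even {p : ℤ → ℝ} (hp_sym : ∀ e : ℤ, p (-e) = p e)
    {f : ℤ → ℝ} (hf_even : ∀ e : ℤ, f (-e) = f e) (x : ℤ) :
    ∑' w : ℤ, p w * f (-x + w) = ∑' w : ℤ, p w * f (x + w) := by
  have h1 : ∀ w : ℤ, p w * f (-x + w) = (fun u => p (-u) * f (x + u)) (-w) := by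
    intro w
    simp only [neg_neg]
    congr 1
    rw [← hf_even (x + -w)]
    congr 1
    ring
  calc ∑' w : ℤ, p w * f (-x + w) = ∑' w : ℤ, (fun u => p (-u) * f (x + u)) (-w) :=
        tsum_congr h1
    _ = ∑' w : ℤ, (fun u => p (-u) * f (x + u)) w := neg_reindex (fun u => p (-u) * f (x + u))
    _ = ∑' w : ℤ, p w * f (x + w) := tsum_congr (fun w => by
          show p (-w) * f (x + w) = _; rw [hp_sym])

private lemma conv_step {p : ℤ → ℝ} (hp_nonneg : ∀ n, 0 ≤ p n) (hp_sum : HasSum p 1)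
    (hp_sym : ∀ e : ℤ, p (-e) = p e) (hp_uni : ∀ e : ℤ, 0 ≤ e → p (e + 1) ≤ p e)
    {f : ℤ → ℝ} {C : ℝ} (hf_bdd : ∀ e, |f e| ≤ C) (hf_even : ∀ e : ℤ, f (-e) = f e)
    (hf_mono : ∀ e : ℤ, 0 ≤ e → f e ≤ f (e + 1)) {x : ℤ} (hx : 0 ≤ x) :
    ∑' w : ℤ, p w * f (x + w) ≤ ∑' w : ℤ, p w * f (x + 1 + w) := by
  have hs1 := summ hp_nonneg hp_sum hf_bdd (fun w => x + w)
  have hs2 := summ hp_nonneg hp_sum hf_bdd (fun w => x + 1 + w)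
  set H : ℤ → ℝ := fun w => p w * f (x + 1 + w) - p w * f (x + w) with hH
  set G : ℤ → ℝ := fun u => p (u - x) * (f (u + 1) - f u) with hG
  have hHsum : Summable H := hs2.sub hs1
  have key : ∀ u : ℤ, H (u - x) = G u := by
    intro u
    simp only [hH, hG]
    rw [show x + 1 + (u - x) = u + 1 by ring, show x + (u - x) = u by ring]
    ring
  have hGsum : Summable G :=
    (hHsum.comp_injective (sub_left_injective (b := x))).congr key
  have t1 : ∑' u : ℤ, G u = ∑' w : ℤ, H w := by
    calc ∑' u : ℤ, G u = ∑' u : ℤ, H ((Equiv.subRight x) u) :=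
          tsum_congr (fun u => by rw [Equiv.subRight_apply]; exact (key u).symm)
      _ = ∑' w : ℤ, H w := (Equiv.subRight x).tsum_eq H
  have t2 : ∑' u : ℤ, G u = ∑' n : ℕ, (G n + G (-(n + 1))) :=
    (tsum_nat_add_neg_add_one hGsum).symm
  have hnn : 0 ≤ ∑' n : ℕ, (G n + G (-(n + 1))) := by
    apply tsum_nonneg
    intro n
    set m : ℤ := (n : ℤ) with hmdef
    have hm : (0 : ℤ) ≤ m := Int.natCast_nonneg n
    have e1 : f (-(m + 1) + 1) = f m := by rw [show -(m + 1) + 1 = -m by ring, hf_even]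
    have e2 : f (-(m + 1)) = f (m + 1) := hf_even (m + 1)
    have e3 : p (-(m + 1) - x) = p (m + 1 + x) := by
      rw [show -(m + 1) - x = -(m + 1 + x) by ring, hp_sym]
    have h4 : p (m + 1 + x) ≤ p (m - x) := by
      rw [p_abs hp_sym (m - x)]
      refine p_mono hp_uni _ _ (abs_nonneg _) ?_
      refine le_trans (le_abs_self _) ?_
      rw [abs_abs]
      exact abs_le.mpr ⟨by linarith, by linarith⟩
    have h5 : 0 ≤ f (m + 1) - f m := sub_nonneg.mpr (hf_mono m hm)
    show 0 ≤ G m + G (-(m + 1))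
    simp only [hG]
    rw [e1, e2, e3]
    nlinarith [mul_nonneg (sub_nonneg.mpr h4) h5]
  have t3 : ∑' w : ℤ, H w = (∑' w : ℤ, p w * f (x + 1 + w)) - ∑' w : ℤ, p w * f (x + w) :=
    Summable.tsum_sub hs2 hs1
  have hpos : 0 ≤ ∑' w : ℤ, H w := by rw [← t1, t2]; exact hnn
  linarith [t3 ▸ hpos]

private lemma conv_mono {p : ℤ → ℝ} (hp_nonneg : ∀ n, 0 ≤ p n) (hp_sum : HasSum p 1)
    (hp_sym : ∀ e : ℤ, p (-e) = p e) (hp_uni : ∀ e : ℤ, 0 ≤ e → p (e + 1) ≤ p e)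
    {f : ℤ → ℝ} {C : ℝ} (hf_bdd : ∀ e, |f e| ≤ C) (hf_even : ∀ e : ℤ, f (-e) = f e)
    (hf_mono : ∀ e : ℤ, 0 ≤ e → f e ≤ f (e + 1)) {x y : ℤ} (hx : 0 ≤ x) (hxy : x ≤ y) :
    ∑' w : ℤ, p w * f (x + w) ≤ ∑' w : ℤ, p w * f (y + w) := by
  refine Int.le_induction
    (motive := fun y _ => ∑' w : ℤ, p w * f (x + w) ≤ ∑' w : ℤ, p w * f (y + w))
    (le_refl _) (fun y hy ih => le_trans ih ?_) y hxy
  exact conv_step hp_nonneg hp_sum hp_sym hp_uni hf_bdd hf_even hf_mono (le_trans hx hy)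

private lemma conv_ae {p : ℤ → ℝ} (hp_nonneg : ∀ n, 0 ≤ p n) (hp_sum : HasSum p 1)
    (hp_sym : ∀ e : ℤ, p (-e) = p e) (hp_uni : ∀ e : ℤ, 0 ≤ e → p (e + 1) ≤ p e)
    {f : ℤ → ℝ} {C : ℝ} (hf_bdd : ∀ e, |f e| ≤ C) (hf_even : ∀ e : ℤ, f (-e) = f e)
    (hf_mono : ∀ e : ℤ, 0 ≤ e → f e ≤ f (e + 1)) (a : ℤ) {e : ℤ} (he : 0 ≤ e) :
    ∑' w : ℤ, p w * f (a * e + w) ≤ ∑' w : ℤ, p w * f (a * (e + 1) + w) := by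
  rcases le_or_gt 0 a with ha | ha
  · exact conv_mono hp_nonneg hp_sum hp_sym hp_uni hf_bdd hf_even hf_mono
      (mul_nonneg ha he) (by nlinarith)
  · have hb : (0:ℤ) ≤ -a := by omega
    have h1 : ∑' w : ℤ, p w * f (a * e + w) = ∑' w : ℤ, p w * f ((-a) * e + w) := by
      rw [show a * e = -((-a) * e) by ring]
      exact conv_even hp_sym hf_even _
    have h2 : ∑' w : ℤ, p w * f (a * (e + 1) + w) =
        ∑' w : ℤ, p w * f ((-a) * (e + 1) + w) := by
      rw [show a * (e + 1) = -((-a) * (e + 1)) by ring]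
      exact conv_even hp_sym hf_even _
    rw [h1, h2]
    exact conv_mono hp_nonneg hp_sum hp_sym hp_uni hf_bdd hf_even hf_mono
      (mul_nonneg hb he) (by nlinarith)

private noncomputable def Tmap (p d : ℤ → ℝ) (lam β : ℝ) (a : ℤ) (f : ℤ → ℝ) :
    ℤ → ℝ := fun e =>
  min ((1 - β) * lam + β * ∑' w : ℤ, p w * f w)
    ((1 - β) * d e + β * ∑' w : ℤ, p w * f (a * e + w))

private lemma contract {p d : ℤ → ℝ} {lam β : ℝ} (hp_nonneg : ∀ n, 0 ≤ p n)
    (hp_sum : HasSum p 1) (hβ0 : 0 ≤ β) (a : ℤ) {f g : ℤ → ℝ} {Cf Cg M : ℝ}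
    (hf : ∀ e, |f e| ≤ Cf) (hg : ∀ e, |g e| ≤ Cg) (hM : ∀ w, |f w - g w| ≤ M) (e : ℤ) :
    |Tmap p d lam β a f e - Tmap p d lam β a g e| ≤ β * M := by
  unfold Tmap
  refine le_trans (abs_min_sub_min_le_max _ _ _ _) (max_le ?_ ?_)
  · rw [show (1 - β) * lam + β * (∑' w : ℤ, p w * f w)
        - ((1 - β) * lam + β * ∑' w : ℤ, p w * g w)
        = β * ((∑' w : ℤ, p w * f w) - ∑' w : ℤ, p w * g w) by ring,
      abs_mul, abs_of_nonneg hβ0]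
    refine mul_le_mul_of_nonneg_left ?_ hβ0
    exact tsum_diff hp_nonneg hp_sum hf hg hM (fun w => w)
  · rw [show (1 - β) * d e + β * (∑' w : ℤ, p w * f (a * e + w))
        - ((1 - β) * d e + β * ∑' w : ℤ, p w * g (a * e + w))
        = β * ((∑' w : ℤ, p w * f (a * e + w)) - ∑' w : ℤ, p w * g (a * e + w)) by ring,
      abs_mul, abs_of_nonneg hβ0]
    refine mul_le_mul_of_nonneg_left ?_ hβ0
    exact tsum_diff hp_nonneg hp_sum hf hg hM (fun w => a * e + w)

private lemma uniq {p d : ℤ → ℝ} {lam β : ℝ} (hp_nonneg : ∀ n, 0 ≤ p n)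
    (hp_sum : HasSum p 1) (hβ : β ∈ Set.Ioo (0 : ℝ) 1) (a : ℤ) {f g : ℤ → ℝ} {Cf Cg : ℝ}
    (hfb : ∀ e, |f e| ≤ Cf) (hgb : ∀ e, |g e| ≤ Cg)
    (hf : ∀ e, f e = Tmap p d lam β a f e)
    (hg : ∀ e, g e = Tmap p d lam β a g e) : f = g := by
  set M := sSup (Set.range fun e => |f e - g e|) with hMdef
  have hbdd : BddAbove (Set.range fun e => |f e - g e|) := by
    refine ⟨Cf + Cg, ?_⟩
    rintro _ ⟨e, rfl⟩
    calc |f e - g e| = |f e + -(g e)| := by rw [sub_eq_add_neg]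
      _ ≤ |f e| + |-(g e)| := abs_add_le _ _
      _ = |f e| + |g e| := by rw [abs_neg]
      _ ≤ Cf + Cg := add_le_add (hfb e) (hgb e)
  have hle : ∀ e, |f e - g e| ≤ M := fun e => le_csSup hbdd ⟨e, rfl⟩
  have hstep : ∀ e, |f e - g e| ≤ β * M := by
    intro e
    rw [hf e, hg e]
    exact contract hp_nonneg hp_sum (le_of_lt hβ.1) a hfb hgb hle e
  have hMle : M ≤ β * M := by
    refine csSup_le (Set.range_nonempty _) ?_
    rintro _ ⟨e, rfl⟩
    exact hstep e
  have hM0 : 0 ≤ M := le_trans (abs_nonneg _) (hle 0)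
  have hMz : M = 0 := by nlinarith [hβ.2]
  funext e
  have h := (hle e).trans (le_of_eq hMz)
  exact sub_eq_zero.mp (abs_eq_zero.mp (le_antisymm h (abs_nonneg _)))

end StRe6

/-- the unique bounded fixed point of the infinite-horizon Bellman operator is
even and nondecreasing on the nonnegative integers, and the fixed points for parameter `a`
and parameter `-a` coincide. -/
theorem stmt_6 (p : ℤ → ℝ) (hp_nonneg : ∀ n, 0 ≤ p n) (hp_sum : HasSum p 1)
    (hp_sym : ∀ e : ℤ, p (-e) = p e)
    (hp_unimodal : ∀ e : ℤ, 0 ≤ e → p (e + 1) ≤ p e)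
    (d : ℤ → ℝ) (hd_bdd : ∃ C, ∀ e, |d e| ≤ C) (hd_even : ∀ e : ℤ, d (-e) = d e)
    (hd0 : d 0 = 0)
    (hd_mono : ∀ e₁ e₂ : ℤ, 0 ≤ e₂ → e₂ ≤ e₁ → d e₂ ≤ d e₁)
    (a : ℤ) (lam : ℝ) (hlam : 0 < lam) (β : ℝ) (hβ : β ∈ Set.Ioo (0 : ℝ) 1)
    -- V is a bounded fixed point of the Bellman operator for parameter a
    (V : ℤ → ℝ) (hV_bdd : ∃ C, ∀ e, |V e| ≤ C)
    (hV : ∀ e : ℤ, V e =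
      min ((1 - β) * lam + β * ∑' w : ℤ, p w * V w)
          ((1 - β) * d e + β * ∑' w : ℤ, p w * V (a * e + w)))
    -- V' is a bounded fixed point of the Bellman operator for parameter -a
    (V' : ℤ → ℝ) (hV'_bdd : ∃ C, ∀ e, |V' e| ≤ C)
    (hV' : ∀ e : ℤ, V' e =
      min ((1 - β) * lam + β * ∑' w : ℤ, p w * V' w)
          ((1 - β) * d e + β * ∑' w : ℤ, p w * V' ((-a) * e + w))) :
    (∀ e : ℤ, V e = V (-e)) ∧ (∀ e : ℤ, 0 ≤ e → V e ≤ V (e + 1)) ∧ V' = V := by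
  obtain ⟨Cd, hd_bdd⟩ := hd_bdd
  obtain ⟨Cv, hV_bdd⟩ := hV_bdd
  obtain ⟨Cv', hV'_bdd⟩ := hV'_bdd
  have hβ0 : (0:ℝ) ≤ β := le_of_lt hβ.1
  have hβ1 : β < 1 := hβ.2
  have hVT : ∀ e, V e = StRe6.Tmap p d lam β a V e := hV
  have hV'T : ∀ e, V' e = StRe6.Tmap p d lam β (-a) V' e := hV'
  -- evenness of V
  have hgb : ∀ e, |(fun e => V (-e)) e| ≤ Cv := fun e => hV_bdd (-e)
  have hgfix : ∀ e, (fun e => V (-e)) e = StRe6.Tmap p d lam β a (fun e => V (-e)) e := by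
    intro e
    show V (-e) = min ((1 - β) * lam + β * ∑' w : ℤ, p w * V (-w))
      ((1 - β) * d e + β * ∑' w : ℤ, p w * V (-(a * e + w)))
    rw [hV (-e)]
    congr 1
    · rw [StRe6.sum_neg hp_sym V]
    · congr 1
      · rw [hd_even]
      · congr 1
        have h1 : ∀ w : ℤ, p w * V (-(a * e + w)) =
            p w * (fun u => V (-(a * e) + u)) (-w) := by
          intro w
          show _ = p w * V (-(a * e) + -w)
          rw [show -(a * e) + -w = -(a * e + w) by ring]
        calc ∑' w : ℤ, p w * V (a * -e + w)
            = ∑' w : ℤ, p w * (fun u => V (-(a * e) + u)) w := by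
              exact tsum_congr (fun w => by
                show p w * V (a * -e + w) = p w * V (-(a * e) + w)
                rw [show a * -e = -(a * e) by ring])
          _ = ∑' w : ℤ, p w * (fun u => V (-(a * e) + u)) (-w) :=
              (StRe6.sum_neg hp_sym (fun u => V (-(a * e) + u))).symm
          _ = ∑' w : ℤ, p w * V (-(a * e + w)) := tsum_congr (fun w => (h1 w).symm)
  have hVeq : V = fun e => V (-e) :=
    StRe6.uniq hp_nonneg hp_sum hβ a hV_bdd hgb hVT hgfix
  have hVeven : ∀ e : ℤ, V e = V (-e) := fun e => congrFun hVeq e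
  have hVeven' : ∀ e : ℤ, V (-e) = V e := fun e => (hVeven e).symm
  -- V' = V
  have hVfix' : ∀ e, V e = StRe6.Tmap p d lam β (-a) V e := by
    intro e
    unfold StRe6.Tmap
    have h : ∑' w : ℤ, p w * V ((-a) * e + w) = ∑' w : ℤ, p w * V (a * e + w) := by
      rw [show (-a) * e = -(a * e) by ring]
      exact StRe6.conv_even hp_sym hVeven' (a * e)
    rw [h]
    exact hV e
  have hV'eq : V' = V :=
    StRe6.uniq hp_nonneg hp_sum hβ (-a) hV'_bdd hV_bdd hV'T hVfix'
  -- monotonicity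
  set C₀ : ℝ := max lam Cd with hC₀
  have hCd0 : 0 ≤ Cd := le_trans (abs_nonneg _) (hd_bdd 0)
  have hC₀0 : 0 ≤ C₀ := le_trans (le_of_lt hlam) (le_max_left _ _)
  have hlamC : lam ≤ C₀ := le_max_left _ _
  have hdC : ∀ e, |d e| ≤ C₀ := fun e => le_trans (hd_bdd e) (le_max_right _ _)
  set T : (ℤ → ℝ) → ℤ → ℝ := StRe6.Tmap p d lam β a with hT
  have pres : ∀ f : ℤ → ℝ, (∀ e, |f e| ≤ C₀) → (∀ e : ℤ, f (-e) = f e) →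
      (∀ e : ℤ, 0 ≤ e → f e ≤ f (e + 1)) →
      (∀ e, |T f e| ≤ C₀) ∧ (∀ e : ℤ, T f (-e) = T f e) ∧
        (∀ e : ℤ, 0 ≤ e → T f e ≤ T f (e + 1)) := by
    intro f hfb hfe hfm
    refine ⟨?_, ?_, ?_⟩
    · intro e
      have hA : |∑' w : ℤ, p w * f w| ≤ C₀ :=
        StRe6.tsum_bound hp_nonneg hp_sum hfb (fun w => w)
      have hB : |∑' w : ℤ, p w * f (a * e + w)| ≤ C₀ :=
        StRe6.tsum_bound hp_nonneg hp_sum hfb (fun w => a * e + w)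
      rw [abs_le] at hA hB
      have hde := abs_le.mp (hdC e)
      show |min ((1 - β) * lam + β * ∑' w : ℤ, p w * f w)
        ((1 - β) * d e + β * ∑' w : ℤ, p w * f (a * e + w))| ≤ C₀
      rw [abs_le]
      constructor
      · refine le_min ?_ ?_
        · nlinarith
        · nlinarith
      · refine le_trans (min_le_left _ _) ?_
        nlinarith
    · intro e
      show min _ _ = min _ _
      congr 1
      rw [hd_even, show a * -e = -(a * e) by ring,
        StRe6.conv_even hp_sym hfe (a * e)]
    · intro e he
      refine min_le_min (le_refl _) ?_
      have h1 : d e ≤ d (e + 1) := hd_mono (e + 1) e he (by linarith)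
      have h2 := StRe6.conv_ae hp_nonneg hp_sum hp_sym hp_unimodal hfb hfe hfm a he
      have hβ1' : (0:ℝ) ≤ 1 - β := by linarith
      nlinarith
  set U : ℕ → ℤ → ℝ := fun n => T^[n] (fun _ => (0:ℝ)) with hU
  have hUsucc : ∀ n, U (n + 1) = T (U n) := fun n =>
    Function.iterate_succ_apply' T n (fun _ => (0:ℝ))
  have hUprop : ∀ n, (∀ e, |U n e| ≤ C₀) ∧ (∀ e : ℤ, U n (-e) = U n e) ∧
      (∀ e : ℤ, 0 ≤ e → U n e ≤ U n (e + 1)) := by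
    intro n
    induction n with
    | zero =>
      refine ⟨fun e => ?_, fun e => rfl, fun e he => le_refl _⟩
      show |(0:ℝ)| ≤ C₀
      rw [abs_zero]; exact hC₀0
    | succ n ih =>
      rw [hUsucc n]
      exact pres (U n) ih.1 ih.2.1 ih.2.2
  have herr : ∀ n, ∀ e, |U n e - V e| ≤ β ^ n * (C₀ + Cv) := by
    intro n
    induction n with
    | zero =>
      intro e
      show |(0:ℝ) - V e| ≤ β ^ 0 * (C₀ + Cv)
      rw [zero_sub, abs_neg, pow_zero, one_mul]
      exact le_trans (hV_bdd e) (by linarith)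
    | succ n ih =>
      intro e
      rw [hUsucc n]
      have h := StRe6.contract (p := p) (d := d) (lam := lam) (β := β) hp_nonneg hp_sum hβ0 a (hUprop n).1 hV_bdd ih e
      have h2 : T (U n) e - V e = StRe6.Tmap p d lam β a (U n) e
          - StRe6.Tmap p d lam β a V e := by rw [← hT, ← hVT e]
      rw [h2]
      calc |StRe6.Tmap p d lam β a (U n) e - StRe6.Tmap p d lam β a V e|
          ≤ β * (β ^ n * (C₀ + Cv)) := h
        _ = β ^ (n + 1) * (C₀ + Cv) := by ring
  have hmono : ∀ e : ℤ, 0 ≤ e → V e ≤ V (e + 1) := by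
    intro e he
    have hall : ∀ n : ℕ, V e ≤ V (e + 1) + 2 * (β ^ n * (C₀ + Cv)) := by
      intro n
      have h1 := abs_le.mp (herr n e)
      have h2 := abs_le.mp (herr n (e + 1))
      have h3 := (hUprop n).2.2 e he
      linarith
    have t0 : Filter.Tendsto (fun n : ℕ => β ^ n) Filter.atTop (nhds 0) :=
      tendsto_pow_atTop_nhds_zero_of_lt_one hβ0 hβ1
    have t1 : Filter.Tendsto (fun n : ℕ => V (e + 1) + 2 * (β ^ n * (C₀ + Cv)))
        Filter.atTop (nhds (V (e + 1) + 2 * (0 * (C₀ + Cv)))) :=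
      Filter.Tendsto.add tendsto_const_nhds ((t0.mul_const (C₀ + Cv)).const_mul 2)
    rw [zero_mul, mul_zero, add_zero] at t1
    exact ge_of_tendsto' t1 hall
  exact ⟨hVeven, hmono, hV'eq⟩
end

section
/- Let p : ℤ → ℝ be a probability mass function that is symmetric (p_e = p_{−e}) and unimodal (p_e ≥ p_{e+1} for all e ≥ 0), let d : ℤ → ℝ be bounded, even, with d(0) = 0 and nondecreasing on nonnegative integers, and fix a ∈ ℤ, λ > 0, β ∈ (0,1). Let V be the unique bounded fixed point of the Bellman operator (TV)(e) = min{ (1−β)λ + β Σ_{w∈ℤ} p_w V(w), (1−β)d(e) + β Σ_{w∈ℤ} p_w V(ae+w) }. Then: (i) V(e) ≤ λ for all e ∈ ℤ; (ii) V(0) = β Σ_{w∈ℤ} p_w V(w); and (iii) 0 ≤ V(e) − V(0) ≤ (1−β)λ for all e ∈ ℤ. -/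
open Filter Topology

private lemma absMono_of_even_mono (f : ℤ → ℝ) (hev : ∀ e : ℤ, f (-e) = f e)
    (hmono : ∀ e₁ e₂ : ℤ, 0 ≤ e₂ → e₂ ≤ e₁ → f e₂ ≤ f e₁) :
    ∀ x y : ℤ, |x| ≤ |y| → f x ≤ f y := by
  have habs : ∀ x : ℤ, f |x| = f x := by
    intro x
    rcases abs_cases x with ⟨h, _⟩ | ⟨h, _⟩
    · rw [h]
    · rw [h, hev]
  intro x y h
  rw [← habs x, ← habs y]
  exact hmono _ _ (abs_nonneg x) h

private lemma absAnti_of_even_step (p : ℤ → ℝ) (hsym : ∀ e : ℤ, p (-e) = p e)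
    (hstep : ∀ e : ℤ, 0 ≤ e → p (e + 1) ≤ p e) :
    ∀ x y : ℤ, |x| ≤ |y| → p y ≤ p x := by
  have hmono : ∀ e₁ e₂ : ℤ, 0 ≤ e₂ → e₂ ≤ e₁ → p e₁ ≤ p e₂ := by
    intro e₁ e₂ h0 hle
    refine Int.le_induction (motive := fun n _ => p n ≤ p e₂) (le_refl _) (fun n hn ih => ?_) e₁ hle
    exact le_trans (hstep n (le_trans h0 hn)) ih
  intro x y h
  have := absMono_of_even_mono (fun e => -p e) (fun e => by simp [hsym])
    (fun e₁ e₂ h0 hle => neg_le_neg (hmono e₁ e₂ h0 hle)) x y h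
  simpa using this

private lemma summable_mul_bdd (q : ℤ → ℝ) (hq : Summable q) (hq0 : ∀ n, 0 ≤ q n)
    (g : ℤ → ℝ) (K : ℝ) (hg : ∀ e, |g e| ≤ K) :
    Summable fun w => q w * g w := by
  refine Summable.of_norm_bounded (hq.mul_right K) fun w => ?_
  rw [Real.norm_eq_abs, abs_mul, abs_of_nonneg (hq0 w)]
  exact mul_le_mul_of_nonneg_left (hg w) (hq0 w)

private lemma abs_tsum_mul_le (p : ℤ → ℝ) (hp0 : ∀ n, 0 ≤ p n) (hps : HasSum p 1)
    (g : ℤ → ℝ) (K : ℝ) (hg : ∀ e, |g e| ≤ K) : |∑' w : ℤ, p w * g w| ≤ K := by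
  have hsum : Summable fun w => p w * g w := summable_mul_bdd p hps.summable hp0 g K hg
  have h1 : ‖∑' w : ℤ, p w * g w‖ ≤ ∑' w : ℤ, ‖p w * g w‖ :=
    norm_tsum_le_tsum_norm (by simpa [Real.norm_eq_abs, abs_mul] using hsum.abs)
  have h2 : ∑' w : ℤ, ‖p w * g w‖ ≤ ∑' w : ℤ, p w * K := by
    refine Summable.tsum_le_tsum (fun w => ?_) (by simpa [Real.norm_eq_abs, abs_mul] using hsum.abs)
      (hps.summable.mul_right K)
    rw [Real.norm_eq_abs, abs_mul, abs_of_nonneg (hp0 w)]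
    exact mul_le_mul_of_nonneg_left (hg w) (hp0 w)
  have h3 : ∑' w : ℤ, p w * K = K := by rw [tsum_mul_right, hps.tsum_eq, one_mul]
  calc |∑' w : ℤ, p w * g w| = ‖∑' w : ℤ, p w * g w‖ := (Real.norm_eq_abs _).symm
    _ ≤ ∑' w : ℤ, p w * K := le_trans h1 h2
    _ = K := h3

private lemma summable_shift (p : ℤ → ℝ) (hps : Summable p) (c : ℤ) :
    Summable fun u : ℤ => p (u - c) := by
  have := (Equiv.subRight c).summable_iff.mpr hps
  exact this

private lemma tsum_shift_eq (p f : ℤ → ℝ) (c : ℤ) :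
    ∑' w : ℤ, p w * f (c + w) = ∑' u : ℤ, p (u - c) * f u := by
  rw [← (Equiv.addLeft c).tsum_eq (fun u => p (u - c) * f u)]
  refine tsum_congr fun w => ?_
  simp [add_sub_cancel_left]

/-- Core: convolution with a symmetric unimodal pmf is monotone in nonneg shifts. -/
private lemma shift_sum_mono_core (p : ℤ → ℝ) (hp0 : ∀ n, 0 ≤ p n) (hps : Summable p)
    (pabs : ∀ x y : ℤ, |x| ≤ |y| → p y ≤ p x)
    (f : ℤ → ℝ) (K : ℝ) (hfK : ∀ e, |f e| ≤ K)
    (fabs : ∀ x y : ℤ, |x| ≤ |y| → f x ≤ f y)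
    {c₂ c₁ : ℤ} (hc2 : 0 ≤ c₂) (hc1 : c₂ ≤ c₁) :
    ∑' w : ℤ, p w * f (c₂ + w) ≤ ∑' w : ℤ, p w * f (c₁ + w) := by
  set s : ℤ := c₁ + c₂ with hs
  set g : ℤ → ℝ := fun u => (p (u - c₁) - p (u - c₂)) * f u with hgdef
  have peven : ∀ z : ℤ, p (-z) = p z := fun z =>
    le_antisymm (pabs z (-z) (by rw [abs_neg])) (pabs (-z) z (by rw [abs_neg]))
  have h1 : Summable fun u : ℤ => p (u - c₁) * f u :=
    summable_mul_bdd _ (summable_shift p hps c₁) (fun n => hp0 _) f K hfK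
  have h2 : Summable fun u : ℤ => p (u - c₂) * f u :=
    summable_mul_bdd _ (summable_shift p hps c₂) (fun n => hp0 _) f K hfK
  have hg : Summable g := by
    have := h1.sub h2
    refine this.congr fun u => ?_
    simp [hgdef, sub_mul]
  have hgflip : Summable fun u : ℤ => g (s - u) := by
    have := (Equiv.subLeft s).summable_iff.mpr hg
    exact this
  have hswap : ∑' u : ℤ, g (s - u) = ∑' u : ℤ, g u := (Equiv.subLeft s).tsum_eq g
  have key : ∀ u : ℤ, 0 ≤ g u + g (s - u) := by
    intro u
    have e1 : p (s - u - c₁) = p (u - c₂) := by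
      rw [show s - u - c₁ = -(u - c₂) by rw [hs]; ring, peven]
    have e2 : p (s - u - c₂) = p (u - c₁) := by
      rw [show s - u - c₂ = -(u - c₁) by rw [hs]; ring, peven]
    have hrw : g u + g (s - u) = (p (u - c₁) - p (u - c₂)) * (f u - f (s - u)) := by
      simp only [hgdef, e1, e2]; ring
    rw [hrw]
    rcases le_or_gt (2 * u) s with h | h
    · have ha : |u - c₂| ≤ |u - c₁| := by
        rcases abs_cases (u - c₂) with ⟨e1', _⟩ | ⟨e1', _⟩ <;>
          rcases abs_cases (u - c₁) with ⟨e2', _⟩ | ⟨e2', _⟩ <;> rw [e1', e2'] <;> omega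
      have hb : |u| ≤ |s - u| := by
        rcases abs_cases u with ⟨e1', _⟩ | ⟨e1', _⟩ <;>
          rcases abs_cases (s - u) with ⟨e2', _⟩ | ⟨e2', _⟩ <;> rw [e1', e2'] <;> omega
      have hp' : p (u - c₁) - p (u - c₂) ≤ 0 := sub_nonpos.mpr (pabs _ _ ha)
      have hf' : f u - f (s - u) ≤ 0 := sub_nonpos.mpr (fabs _ _ hb)
      nlinarith
    · have ha : |u - c₁| ≤ |u - c₂| := by
        rcases abs_cases (u - c₁) with ⟨e1', _⟩ | ⟨e1', _⟩ <;>
          rcases abs_cases (u - c₂) with ⟨e2', _⟩ | ⟨e2', _⟩ <;> rw [e1', e2'] <;> omega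
      have hb : |s - u| ≤ |u| := by
        rcases abs_cases (s - u) with ⟨e1', _⟩ | ⟨e1', _⟩ <;>
          rcases abs_cases u with ⟨e2', _⟩ | ⟨e2', _⟩ <;> rw [e1', e2'] <;> omega
      exact mul_nonneg (sub_nonneg.mpr (pabs _ _ ha)) (sub_nonneg.mpr (fabs _ _ hb))
  have hsum_nonneg : 0 ≤ ∑' u : ℤ, (g u + g (s - u)) := tsum_nonneg key
  have hdouble : ∑' u : ℤ, (g u + g (s - u)) = 2 * ∑' u : ℤ, g u := by
    rw [Summable.tsum_add hg hgflip, hswap]; ring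
  have hgpos : 0 ≤ ∑' u : ℤ, g u := by
    have := hdouble ▸ hsum_nonneg
    linarith
  have hdiff : ∑' u : ℤ, g u =
      (∑' w : ℤ, p w * f (c₁ + w)) - ∑' w : ℤ, p w * f (c₂ + w) := by
    rw [tsum_shift_eq p f c₁, tsum_shift_eq p f c₂, ← Summable.tsum_sub h1 h2]
    refine tsum_congr fun u => ?_
    simp [hgdef, sub_mul]
  linarith [hdiff ▸ hgpos]

private lemma tsum_shift_neg (p : ℤ → ℝ) (psym : ∀ z : ℤ, p (-z) = p z)
    (f : ℤ → ℝ) (feven : ∀ z : ℤ, f (-z) = f z) (c : ℤ) :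
    ∑' w : ℤ, p w * f (c + w) = ∑' w : ℤ, p w * f (-c + w) := by
  rw [← (Equiv.neg ℤ).tsum_eq (fun w => p w * f (-c + w))]
  refine tsum_congr fun w => ?_
  simp only [Equiv.neg_apply]
  rw [psym, show (-c + -w : ℤ) = -(c + w) by ring, feven]

/-- General form with `|c₂| ≤ |c₁|`. -/
private lemma shift_sum_mono (p : ℤ → ℝ) (hp0 : ∀ n, 0 ≤ p n) (hps : Summable p)
    (pabs : ∀ x y : ℤ, |x| ≤ |y| → p y ≤ p x)
    (f : ℤ → ℝ) (K : ℝ) (hfK : ∀ e, |f e| ≤ K)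
    (fabs : ∀ x y : ℤ, |x| ≤ |y| → f x ≤ f y)
    {c₂ c₁ : ℤ} (hc : |c₂| ≤ |c₁|) :
    ∑' w : ℤ, p w * f (c₂ + w) ≤ ∑' w : ℤ, p w * f (c₁ + w) := by
  have peven : ∀ z : ℤ, p (-z) = p z := fun z =>
    le_antisymm (pabs z (-z) (by rw [abs_neg])) (pabs (-z) z (by rw [abs_neg]))
  have feven : ∀ z : ℤ, f (-z) = f z := fun z =>
    le_antisymm (fabs (-z) z (by rw [abs_neg])) (fabs z (-z) (by rw [abs_neg]))
  have habs : ∀ c : ℤ, ∑' w : ℤ, p w * f (c + w) = ∑' w : ℤ, p w * f (|c| + w) := by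
    intro c
    rcases abs_cases c with ⟨h, _⟩ | ⟨h, _⟩
    · rw [h]
    · rw [h, ← tsum_shift_neg p peven f feven c]
  rw [habs c₂, habs c₁]
  exact shift_sum_mono_core p hp0 hps pabs f K hfK fabs (abs_nonneg c₂) hc

noncomputable def bellT (p d : ℤ → ℝ) (a : ℤ) (lam β : ℝ) (f : ℤ → ℝ) : ℤ → ℝ :=
  fun e => min ((1 - β) * lam + β * ∑' w : ℤ, p w * f w)
               ((1 - β) * d e + β * ∑' w : ℤ, p w * f (a * e + w))

noncomputable def bellW (p d : ℤ → ℝ) (a : ℤ) (lam β : ℝ) : ℕ → ℤ → ℝ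
  | 0 => fun _ => 0
  | n + 1 => bellT p d a lam β (bellW p d a lam β n)

/-- SEN-type bounds for the unique bounded fixed point of the Bellman
operator: `V ≤ λ`, `V(0) = β Σ_w p_w V(w)`, and `0 ≤ V(e) - V(0) ≤ (1-β)λ`. -/
theorem stmt_7 (p : ℤ → ℝ) (hp_nonneg : ∀ n, 0 ≤ p n) (hp_sum : HasSum p 1)
    (hp_sym : ∀ e : ℤ, p (-e) = p e)
    (hp_unimodal : ∀ e : ℤ, 0 ≤ e → p (e + 1) ≤ p e)
    (d : ℤ → ℝ) (hd_bdd : ∃ C, ∀ e, |d e| ≤ C) (hd_even : ∀ e : ℤ, d (-e) = d e)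
    (hd0 : d 0 = 0)
    (hd_mono : ∀ e₁ e₂ : ℤ, 0 ≤ e₂ → e₂ ≤ e₁ → d e₂ ≤ d e₁)
    (a : ℤ) (lam : ℝ) (hlam : 0 < lam) (β : ℝ) (hβ : β ∈ Set.Ioo (0 : ℝ) 1)
    (V : ℤ → ℝ) (hV_bdd : ∃ C, ∀ e, |V e| ≤ C)
    (hV : ∀ e : ℤ, V e =
      min ((1 - β) * lam + β * ∑' w : ℤ, p w * V w)
          ((1 - β) * d e + β * ∑' w : ℤ, p w * V (a * e + w))) :
    (∀ e : ℤ, V e ≤ lam) ∧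
    (V 0 = β * ∑' w : ℤ, p w * V w) ∧
    (∀ e : ℤ, 0 ≤ V e - V 0 ∧ V e - V 0 ≤ (1 - β) * lam) := by
  obtain ⟨hβ0, hβ1⟩ := hβ
  obtain ⟨Cv, hCv⟩ := hV_bdd
  have hCv0 : 0 ≤ Cv := le_trans (abs_nonneg _) (hCv 0)
  have hps : Summable p := hp_sum.summable
  have pabs : ∀ x y : ℤ, |x| ≤ |y| → p y ≤ p x :=
    absAnti_of_even_step p hp_sym hp_unimodal
  have dabs : ∀ x y : ℤ, |x| ≤ |y| → d x ≤ d y :=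
    absMono_of_even_mono d hd_even hd_mono
  -- value iteration: W n → V uniformly, W n abs-monotone
  set W : ℕ → ℤ → ℝ := bellW p d a lam β with hW
  have hmain : ∀ n : ℕ, (∀ e, |W n e - V e| ≤ β ^ n * Cv) ∧
      (∀ x y : ℤ, |x| ≤ |y| → W n x ≤ W n y) := by
    intro n
    induction n with
    | zero =>
      constructor
      · intro e; simpa [hW, bellW] using hCv e
      · intro x y _; simp [hW, bellW]
    | succ n ih =>
      obtain ⟨hb, hm⟩ := ih
      have hβn1 : β ^ n ≤ 1 := pow_le_one₀ (le_of_lt hβ0) (le_of_lt hβ1)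
      have hfK : ∀ e, |W n e| ≤ 2 * Cv := by
        intro e
        calc |W n e| = |(W n e - V e) + V e| := by ring_nf
          _ ≤ |W n e - V e| + |V e| := abs_add_le _ _
          _ ≤ β ^ n * Cv + Cv := add_le_add (hb e) (hCv e)
          _ ≤ 2 * Cv := by nlinarith
      have hWsum : ∀ c : ℤ, Summable fun w => p w * W n (c + w) :=
        fun c => summable_mul_bdd p hps hp_nonneg _ (2 * Cv) (fun w => hfK _)
      have hWsum0 : Summable fun w => p w * W n w :=
        summable_mul_bdd p hps hp_nonneg _ (2 * Cv) hfK
      have hVsum : ∀ c : ℤ, Summable fun w => p w * V (c + w) :=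
        fun c => summable_mul_bdd p hps hp_nonneg _ Cv (fun w => hCv _)
      have hVsum0 : Summable fun w => p w * V w :=
        summable_mul_bdd p hps hp_nonneg _ Cv hCv
      constructor
      · -- contraction step
        intro e
        have hWe : W (n + 1) e = min ((1 - β) * lam + β * ∑' w : ℤ, p w * W n w)
            ((1 - β) * d e + β * ∑' w : ℤ, p w * W n (a * e + w)) := rfl
        rw [hWe, hV e]
        have hmin := abs_min_sub_min_le_max
          ((1 - β) * lam + β * ∑' w : ℤ, p w * W n w)
          ((1 - β) * d e + β * ∑' w : ℤ, p w * W n (a * e + w))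
          ((1 - β) * lam + β * ∑' w : ℤ, p w * V w)
          ((1 - β) * d e + β * ∑' w : ℤ, p w * V (a * e + w))
        have hA : |((1 - β) * lam + β * ∑' w : ℤ, p w * W n w) -
            ((1 - β) * lam + β * ∑' w : ℤ, p w * V w)| ≤ β ^ (n + 1) * Cv := by
          have : ((1 - β) * lam + β * ∑' w : ℤ, p w * W n w) -
              ((1 - β) * lam + β * ∑' w : ℤ, p w * V w) =
              β * ∑' w : ℤ, p w * (W n w - V w) := by
            have h' : ∑' w : ℤ, (p w * W n w - p w * V w) =
                ∑' w : ℤ, p w * W n w - ∑' w : ℤ, p w * V w := Summable.tsum_sub hWsum0 hVsum0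
            rw [show (fun w : ℤ => p w * (W n w - V w)) =
              (fun w : ℤ => p w * W n w - p w * V w) by funext w; ring, h']
            ring
          rw [this, abs_mul, abs_of_nonneg (le_of_lt hβ0), pow_succ]
          calc β * |∑' w : ℤ, p w * (W n w - V w)| ≤ β * (β ^ n * Cv) :=
              mul_le_mul_of_nonneg_left
                (abs_tsum_mul_le p hp_nonneg hp_sum _ (β ^ n * Cv) hb) (le_of_lt hβ0)
            _ = β ^ n * β * Cv := by ring
        have hB : |((1 - β) * d e + β * ∑' w : ℤ, p w * W n (a * e + w)) -
            ((1 - β) * d e + β * ∑' w : ℤ, p w * V (a * e + w))| ≤ β ^ (n + 1) * Cv := by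
          have : ((1 - β) * d e + β * ∑' w : ℤ, p w * W n (a * e + w)) -
              ((1 - β) * d e + β * ∑' w : ℤ, p w * V (a * e + w)) =
              β * ∑' w : ℤ, p w * (W n (a * e + w) - V (a * e + w)) := by
            have h' : ∑' w : ℤ, (p w * W n (a * e + w) - p w * V (a * e + w)) =
                ∑' w : ℤ, p w * W n (a * e + w) - ∑' w : ℤ, p w * V (a * e + w) :=
              Summable.tsum_sub (hWsum _) (hVsum _)
            rw [show (fun w : ℤ => p w * (W n (a * e + w) - V (a * e + w))) =
              (fun w : ℤ => p w * W n (a * e + w) - p w * V (a * e + w)) by funext w; ring, h']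
            ring
          rw [this, abs_mul, abs_of_nonneg (le_of_lt hβ0), pow_succ]
          calc β * |∑' w : ℤ, p w * (W n (a * e + w) - V (a * e + w))| ≤ β * (β ^ n * Cv) :=
              mul_le_mul_of_nonneg_left
                (abs_tsum_mul_le p hp_nonneg hp_sum _ (β ^ n * Cv) (fun w => hb _))
                (le_of_lt hβ0)
            _ = β ^ n * β * Cv := by ring
        calc |min _ _ - min _ _| ≤ _ := hmin
          _ ≤ β ^ (n + 1) * Cv := max_le hA hB
      · -- monotone step
        intro x y hxy
        show bellT p d a lam β (W n) x ≤ bellT p d a lam β (W n) y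
        unfold bellT
        refine min_le_min (le_refl _) (add_le_add ?_ ?_)
        · exact mul_le_mul_of_nonneg_left (dabs x y hxy) (by linarith)
        · refine mul_le_mul_of_nonneg_left ?_ (le_of_lt hβ0)
          refine shift_sum_mono p hp_nonneg hps pabs (W n) (2 * Cv) hfK hm ?_
          rw [abs_mul, abs_mul]
          exact mul_le_mul_of_nonneg_left hxy (abs_nonneg a)
  -- V is abs-monotone
  have htend : ∀ e : ℤ, Tendsto (fun n => W n e) atTop (𝓝 (V e)) := by
    intro e
    rw [tendsto_iff_dist_tendsto_zero]
    have hβpow : Tendsto (fun n : ℕ => β ^ n * Cv) atTop (𝓝 0) := by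
      simpa using (tendsto_pow_atTop_nhds_zero_of_lt_one (le_of_lt hβ0) hβ1).mul_const Cv
    refine squeeze_zero (fun n => dist_nonneg) (fun n => ?_) hβpow
    rw [Real.dist_eq]
    exact (hmain n).1 e
  have Vabs : ∀ x y : ℤ, |x| ≤ |y| → V x ≤ V y := fun x y h =>
    le_of_tendsto_of_tendsto' (htend x) (htend y) (fun n => (hmain n).2 x y h)
  -- summability facts for V
  have hVsum0 : Summable fun w => p w * V w :=
    summable_mul_bdd p hps hp_nonneg _ Cv hCv
  set S : ℝ := ∑' w : ℤ, p w * V w with hS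
  -- Part (i)
  have hne : (Set.range V).Nonempty := ⟨V 0, 0, rfl⟩
  have hbdd : BddAbove (Set.range V) := by
    refine ⟨Cv, ?_⟩; rintro _ ⟨e, rfl⟩; exact (abs_le.mp (hCv e)).2
  set M : ℝ := sSup (Set.range V) with hM
  have hVM : ∀ e, V e ≤ M := fun e => le_csSup hbdd ⟨e, rfl⟩
  have hSM : S ≤ M := by
    have : S ≤ ∑' w : ℤ, p w * M := by
      refine Summable.tsum_le_tsum (fun w => mul_le_mul_of_nonneg_left (hVM w) (hp_nonneg w))
        hVsum0 (hps.mul_right M)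
    rwa [tsum_mul_right, hp_sum.tsum_eq, one_mul] at this
  have hMlam : M ≤ lam := by
    have hstep : M ≤ (1 - β) * lam + β * M := by
      refine csSup_le hne ?_
      rintro _ ⟨e, rfl⟩
      calc V e ≤ (1 - β) * lam + β * S := hV e ▸ min_le_left _ _
        _ ≤ (1 - β) * lam + β * M := by nlinarith
    nlinarith
  have part1 : ∀ e : ℤ, V e ≤ lam := fun e => le_trans (hVM e) hMlam
  -- Part (ii)
  have part2 : V 0 = β * S := by
    have h0 : (∑' w : ℤ, p w * V (a * 0 + w)) = S := by
      refine tsum_congr fun w => ?_; rw [mul_zero, zero_add]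
    have := hV 0
    rw [h0, hd0] at this
    rw [this]
    have : (1 - β) * 0 + β * S = β * S := by ring
    rw [this]
    exact min_eq_right (by nlinarith)
  -- Part (iii)
  have part3 : ∀ e : ℤ, 0 ≤ V e - V 0 ∧ V e - V 0 ≤ (1 - β) * lam := by
    intro e
    constructor
    · -- lower bound
      have hshift : S ≤ ∑' w : ℤ, p w * V (a * e + w) := by
        have h0 : (∑' w : ℤ, p w * V ((0 : ℤ) + w)) = S := by
          refine tsum_congr fun w => ?_; rw [zero_add]
        rw [← h0]
        exact shift_sum_mono p hp_nonneg hps pabs V Cv hCv Vabs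
          (by simpa using abs_nonneg (a * e))
      have hde : 0 ≤ d e := by
        have := dabs 0 e (by simpa using abs_nonneg e)
        rwa [hd0] at this
      have hge : β * S ≤ V e := by
        rw [hV e]
        refine le_min ?_ ?_
        · nlinarith
        · nlinarith
      rw [part2]; linarith
    · have hub : V e ≤ (1 - β) * lam + β * S := hV e ▸ min_le_left _ _
      rw [part2]; linarith
  exact ⟨part1, part2, part3⟩
end

section
/- Let p : ℤ → ℝ be a probability mass function that is symmetric (p_e = p_{−e} for all e ∈ ℤ) and unimodal (p_e ≥ p_{e+1} for all e ≥ 0). For m ∈ ℤ_{≥0}, x ∈ ℤ_{≥0} and a ∈ ℤ_{>0}, define Q(m|x) = Σ_{n∈ℤ, |n| ≥ m} p_{n − ax}. Then for every fixed m ∈ ℤ_{≥0} and a ∈ ℤ_{>0}, the map x ↦ Q(m|x) is nondecreasing on ℤ_{≥0}: for all 0 ≤ x ≤ x′, Q(m|x) ≤ Q(m|x′). -/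
private lemma p_anti (p : ℤ → ℝ) (hp_unimodal : ∀ e : ℤ, 0 ≤ e → p (e + 1) ≤ p e) :
    ∀ i j : ℤ, 0 ≤ i → i ≤ j → p j ≤ p i := by
  intro i j hi hij
  exact Int.le_induction (motive := fun n _ => p n ≤ p i) le_rfl
    (fun k hk ih => le_trans (hp_unimodal k (le_trans hi hk)) ih) j hij

/-- for a symmetric unimodal pmf `p` and `a > 0`, the tail probability
`Q(m|x) = Σ_{|n| ≥ m} p_{n - ax}` is nondecreasing in `x` on the nonnegative integers. -/
theorem stmt_8 (p : ℤ → ℝ) (hp_nonneg : ∀ n, 0 ≤ p n) (hp_sum : HasSum p 1)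
    (hp_sym : ∀ e : ℤ, p (-e) = p e)
    (hp_unimodal : ∀ e : ℤ, 0 ≤ e → p (e + 1) ≤ p e)
    (a : ℤ) (ha : 0 < a) (m : ℤ) (hm : 0 ≤ m) :
    ∀ x x' : ℤ, 0 ≤ x → x ≤ x' →
      (∑' n : ℤ, if m ≤ |n| then p (n - a * x) else 0)
        ≤ ∑' n : ℤ, if m ≤ |n| then p (n - a * x') else 0 := by
  intro x x' hx hxx'
  -- the finite "head" sum
  set G : ℤ → ℝ := fun c => ∑ n ∈ Finset.Icc (1 - m) (m - 1), p (n - c) with hG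
  -- shifted pmf sums to 1
  have hshift : ∀ c : ℤ, HasSum (fun n => p (n - c)) 1 := by
    intro c
    exact (Equiv.subRight c).hasSum_iff.mpr hp_sum
  -- tail sum equals 1 - G c
  have htail : ∀ c : ℤ, (∑' n : ℤ, if m ≤ |n| then p (n - c) else 0) = 1 - G c := by
    intro c
    have hgsum : HasSum (fun n => if m ≤ |n| then 0 else p (n - c)) (G c) := by
      have h0 : ∀ n ∉ Finset.Icc (1 - m) (m - 1),
          (if m ≤ |n| then 0 else p (n - c)) = 0 := by
        intro n hn
        simp only [Finset.mem_Icc, not_and_or, not_le] at hn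
        have : m ≤ |n| := by rcases abs_cases n with h | h <;> omega
        simp [this]
      have : HasSum (fun n => if m ≤ |n| then 0 else p (n - c))
          (∑ n ∈ Finset.Icc (1 - m) (m - 1), (if m ≤ |n| then 0 else p (n - c))) :=
        hasSum_sum_of_ne_finset_zero h0
      convert this using 1
      rw [hG]
      refine Finset.sum_congr rfl ?_
      intro n hn
      simp only [Finset.mem_Icc] at hn
      have : ¬ (m ≤ |n|) := by rcases abs_cases n with h | h <;> omega
      simp [this]
    have hfsum : HasSum (fun n => if m ≤ |n| then p (n - c) else 0) (1 - G c) := by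
      have := (hshift c).sub hgsum
      have heq : (fun n => if m ≤ |n| then p (n - c) else 0)
          = (fun b => p (b - c) - if m ≤ |b| then 0 else p (b - c)) := by
        funext n
        by_cases h : m ≤ |n| <;> simp [h]
      rw [heq]; exact this
    exact hfsum.tsum_eq
  -- single-step decrease of G
  have hstep : ∀ c : ℤ, 0 ≤ c → G (c + 1) ≤ G c := by
    intro c hc
    rcases eq_or_lt_of_le hm with hm0 | hm1
    · simp [hG, ← hm0]
    · -- m ≥ 1
      have h1 : Finset.Icc (1 - m) (m - 1)
          = Finset.map (addRightEmbedding 1) (Finset.Icc (-m) (m - 2)) := by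
        rw [Finset.map_add_right_Icc]
        congr 1 <;> ring
      have hGc1 : G (c + 1) = ∑ k ∈ Finset.Icc (-m) (m - 2), p (k - c) := by
        rw [hG]
        simp only [h1, Finset.sum_map, addRightEmbedding_apply]
        refine Finset.sum_congr rfl fun k _ => by ring_nf
      -- insert endpoints
      have hins1 : Finset.Icc (-m) (m - 1)
          = insert (m - 1) (Finset.Icc (-m) (m - 2)) := by
        ext n; simp only [Finset.mem_Icc, Finset.mem_insert]; omega
      have hins2 : Finset.Icc (-m) (m - 1)
          = insert (-m) (Finset.Icc (1 - m) (m - 1)) := by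
        ext n; simp only [Finset.mem_Icc, Finset.mem_insert]; omega
      have hnm1 : (m - 1 : ℤ) ∉ Finset.Icc (-m) (m - 2) := by
        simp only [Finset.mem_Icc]; omega
      have hnm2 : (-m : ℤ) ∉ Finset.Icc (1 - m) (m - 1) := by
        simp only [Finset.mem_Icc]; omega
      have e1 : ∑ n ∈ Finset.Icc (-m) (m - 1), p (n - c)
          = p ((m - 1) - c) + ∑ k ∈ Finset.Icc (-m) (m - 2), p (k - c) := by
        rw [hins1, Finset.sum_insert hnm1]
      have e2 : ∑ n ∈ Finset.Icc (-m) (m - 1), p (n - c)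
          = p ((-m) - c) + ∑ n ∈ Finset.Icc (1 - m) (m - 1), p (n - c) := by
        rw [hins2, Finset.sum_insert hnm2]
      -- key pointwise inequality : p(-m - c) ≤ p(m - 1 - c)
      have hkey : p ((-m) - c) ≤ p ((m - 1) - c) := by
        have hsym1 : p ((-m) - c) = p (m + c) := by
          have : (-m) - c = -(m + c) := by ring
          rw [this, hp_sym]
        rw [hsym1]
        by_cases hmc : 0 ≤ m - 1 - c
        · exact p_anti p hp_unimodal (m - 1 - c) (m + c) hmc (by omega)
        · have hsym2 : p ((m - 1) - c) = p (c + 1 - m) := by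
            have : (m - 1) - c = -(c + 1 - m) := by ring
            rw [this, hp_sym]
          rw [hsym2]
          exact p_anti p hp_unimodal (c + 1 - m) (m + c) (by omega) (by omega)
      have := add_le_add_right hkey (∑ k ∈ Finset.Icc (-m) (m - 2), p (k - c))
      rw [hGc1, hG]
      linarith [e1, e2]
  -- G is antitone on nonnegatives
  have hanti : ∀ c c' : ℤ, 0 ≤ c → c ≤ c' → G c' ≤ G c := by
    intro c c' hc hcc'
    exact Int.le_induction (motive := fun n _ => G n ≤ G c) le_rfl
      (fun k hk ih => le_trans (hstep k (le_trans hc hk)) ih) c' hcc'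
  rw [htail (a * x), htail (a * x')]
  have : G (a * x') ≤ G (a * x) :=
    hanti (a * x) (a * x') (mul_nonneg ha.le hx) (mul_le_mul_of_nonneg_left hxx' ha.le)
  linarith
end

section
/- Fix k ∈ ℤ_{>0} and p ∈ (0,1/3), and let P^{(k)} be the (2k−1)×(2k−1) matrix indexed by i,j ∈ {−(k−1),…,k−1} with P^{(k)}_{ij} = p if |i−j| = 1, P^{(k)}_{ii} = 1−2p, and 0 otherwise. Then I − P^{(k)} is invertible; letting L = (I − P^{(k)})^{−1} d^{(k)} and M = (I − P^{(k)})^{−1} 𝟏 where d^{(k)} = (|j|)_{j∈{−(k−1),…,k−1}} and 𝟏 is the all-ones vector, the components at index 0 satisfy L_0 = k(k²−1)/(6p) and M_0 = k²/(2p). Consequently, the long-term average distortion and average number of transmissions of the threshold-k strategy satisfy D^{(k)}_1 = L_0/M_0 = (k²−1)/(3k) and N^{(k)}_1 = 1/M_0 = 2p/k². -/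
open Matrix

/-- The killed transition matrix of the symmetric birth-death chain on the silent set
`S^{(k)} = {-(k-1), …, k-1}`. -/
noncomputable def bdMat (p : ℝ) (k : ℕ) :
    Matrix ↥(Finset.Ioo (-(k : ℤ)) (k : ℤ)) ↥(Finset.Ioo (-(k : ℤ)) (k : ℤ)) ℝ :=
  fun i j =>
    if |(i : ℤ) - (j : ℤ)| = 1 then p
    else if (i : ℤ) = (j : ℤ) then 1 - 2 * p
    else 0

noncomputable def Gfun (p : ℝ) (k : ℕ) (x y : ℤ) : ℝ :=
  (((min x y + k) * (k - max x y) : ℤ) : ℝ) / (2 * k * p)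

noncomputable def bdInv (p : ℝ) (k : ℕ) :
    Matrix ↥(Finset.Ioo (-(k : ℤ)) (k : ℤ)) ↥(Finset.Ioo (-(k : ℤ)) (k : ℤ)) ℝ :=
  fun i j => Gfun p k (i : ℤ) (j : ℤ)

noncomputable def Efun (p : ℝ) (I x : ℤ) : ℝ :=
  (if I = x then 1 else 0) - (if |I - x| = 1 then p else if I = x then 1 - 2 * p else 0)

lemma Gfun_bot (p : ℝ) (k : ℕ) {J : ℤ} (hJ : -(k:ℤ) ≤ J) : Gfun p k (-(k:ℤ)) J = 0 := by
  unfold Gfun; rw [min_eq_left hJ]; simp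

lemma Gfun_top (p : ℝ) (k : ℕ) {J : ℤ} (hJ : J ≤ (k:ℤ)) : Gfun p k (k:ℤ) J = 0 := by
  unfold Gfun; rw [max_eq_left hJ]; simp

lemma key (k : ℕ) (hk : 0 < k) (p : ℝ) (hp : p ≠ 0) {I J : ℤ}
    (hI1 : -(k:ℤ) < I) (hI2 : I < k) (hJ1 : -(k:ℤ) < J) (hJ2 : J < k) :
    -p * Gfun p k (I-1) J + 2*p * Gfun p k I J + -p * Gfun p k (I+1) J
      = if I = J then 1 else 0 := by
  have hk0 : (k:ℝ) ≠ 0 := Nat.cast_ne_zero.mpr hk.ne'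
  unfold Gfun
  rcases lt_trichotomy I J with h | h | h
  · rw [if_neg h.ne]
    rw [min_eq_left (by omega : I - 1 ≤ J), min_eq_left (by omega : I ≤ J),
      min_eq_left (by omega : I + 1 ≤ J), max_eq_right (by omega : I - 1 ≤ J),
      max_eq_right (by omega : I ≤ J), max_eq_right (by omega : I + 1 ≤ J)]
    push_cast
    field_simp
    ring
  · subst h
    rw [if_pos rfl]
    rw [min_eq_left (by omega : I - 1 ≤ I), min_self,
      min_eq_right (by omega : I ≤ I + 1), max_eq_right (by omega : I - 1 ≤ I),
      max_self, max_eq_left (by omega : I ≤ I + 1)]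
    push_cast
    field_simp
    ring
  · rw [if_neg h.ne']
    rw [min_eq_right (by omega : J ≤ I - 1), min_eq_right (by omega : J ≤ I),
      min_eq_right (by omega : J ≤ I + 1), max_eq_left (by omega : J ≤ I - 1),
      max_eq_left (by omega : J ≤ I), max_eq_left (by omega : J ≤ I + 1)]
    push_cast
    field_simp
    ring

lemma bd_mul_inv (k : ℕ) (hk : 0 < k) (p : ℝ) (hp : p ≠ 0) :
    (1 - bdMat p k) * bdInv p k = 1 := by
  ext i j
  have hI := i.2
  have hJ := j.2
  simp only [Finset.mem_Ioo] at hI hJ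
  set I := (i : ℤ) with hIdef
  set J := (j : ℤ) with hJdef
  rw [Matrix.mul_apply]
  have h1 : ∑ l : ↥(Finset.Ioo (-(k:ℤ)) (k:ℤ)), (1 - bdMat p k) i l * bdInv p k l j
      = ∑ x ∈ Finset.Ioo (-(k:ℤ)) (k:ℤ), Efun p I x * Gfun p k x J := by
    rw [← Finset.sum_coe_sort (Finset.Ioo (-(k:ℤ)) (k:ℤ))
      (fun x => Efun p I x * Gfun p k x J)]
    refine Finset.sum_congr rfl fun l _ => ?_
    simp only [Matrix.sub_apply, Matrix.one_apply, bdMat, bdInv, Efun, Subtype.ext_iff]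
    rfl
  rw [h1]
  have h2 : ∑ x ∈ Finset.Ioo (-(k:ℤ)) (k:ℤ), Efun p I x * Gfun p k x J
      = ∑ x ∈ Finset.Icc (-(k:ℤ)) (k:ℤ), Efun p I x * Gfun p k x J := by
    refine Finset.sum_subset (fun x hx => ?_) (fun x hx hx' => ?_)
    · simp only [Finset.mem_Ioo] at hx; simp only [Finset.mem_Icc]; omega
    · simp only [Finset.mem_Icc] at hx
      simp only [Finset.mem_Ioo, not_and_or, not_lt] at hx'
      have : x = -(k:ℤ) ∨ x = (k:ℤ) := by omega
      rcases this with h | h <;> subst h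
      · rw [Gfun_bot p k (by omega)]; ring
      · rw [Gfun_top p k (by omega)]; ring
  rw [h2]
  have h3 : ∑ x ∈ Finset.Icc (-(k:ℤ)) (k:ℤ), Efun p I x * Gfun p k x J
      = ∑ x ∈ ({I-1, I, I+1} : Finset ℤ), Efun p I x * Gfun p k x J := by
    refine (Finset.sum_subset (fun x hx => ?_) (fun x hx hx' => ?_)).symm
    · simp only [Finset.mem_insert, Finset.mem_singleton] at hx
      simp only [Finset.mem_Icc]; omega
    · simp only [Finset.mem_insert, Finset.mem_singleton, not_or] at hx'
      have ha : ¬ (|I - x| = 1) := by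
        rw [abs_eq (by norm_num : (0:ℤ) ≤ 1)]; omega
      have hb : I ≠ x := by omega
      unfold Efun
      simp only [if_neg hb, if_neg ha]
      ring
  rw [h3]
  have hm1 : (I-1) ∉ ({I, I+1} : Finset ℤ) := by
    simp only [Finset.mem_insert, Finset.mem_singleton]; omega
  have hm2 : I ∉ ({I+1} : Finset ℤ) := by
    simp only [Finset.mem_singleton]; omega
  rw [Finset.sum_insert hm1, Finset.sum_insert hm2, Finset.sum_singleton]
  have e1 : Efun p I (I-1) = -p := by
    unfold Efun
    have h : |I - (I-1)| = 1 := by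
      have : I - (I-1) = 1 := by ring
      rw [this]; norm_num
    simp only [if_neg (show I ≠ I - 1 by omega), if_pos h]; ring
  have e2 : Efun p I I = 2*p := by
    unfold Efun
    have h : ¬ (|I - I| = 1) := by simp
    rw [if_neg h, if_pos rfl]; norm_num
  have e3 : Efun p I (I+1) = -p := by
    unfold Efun
    have h : |I - (I+1)| = 1 := by
      have : I - (I+1) = -1 := by ring
      rw [this]; norm_num
    simp only [if_neg (show I ≠ I + 1 by omega), if_pos h]; ring
  rw [e1, e2, e3]
  have := key k hk p hp hI.1 hI.2 hJ.1 hJ.2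
  rw [show -p * Gfun p k (I-1) J + (2*p * Gfun p k I J + -p * Gfun p k (I+1) J)
    = -p * Gfun p k (I-1) J + 2*p * Gfun p k I J + -p * Gfun p k (I+1) J by ring, this]
  rw [Matrix.one_apply]
  simp only [Subtype.ext_iff]
  rfl


lemma sum_Ico_cast (f : ℤ → ℤ) (k : ℕ) :
    ∑ x ∈ Finset.Ico (0:ℤ) (k:ℤ), f x = ∑ i ∈ Finset.range k, f (i:ℤ) := by
  refine Finset.sum_nbij' (fun x => x.toNat) (fun i => (i:ℤ)) ?_ ?_ ?_ ?_ ?_ <;>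
    intros a ha <;> simp_all [Finset.mem_Ico, Finset.mem_range] <;> omega

lemma S1 (k : ℕ) : 2 * ∑ i ∈ Finset.range k, (i:ℤ) = k * (k - 1) := by
  induction k with
  | zero => simp
  | succ n ih => rw [Finset.sum_range_succ]; push_cast; push_cast at ih; linear_combination ih

lemma S2 (k : ℕ) : 6 * ∑ i ∈ Finset.range k, (i:ℤ)^2 = k * (k - 1) * (2*k - 1) := by
  induction k with
  | zero => simp
  | succ n ih => rw [Finset.sum_range_succ]; push_cast; push_cast at ih; linear_combination ih

lemma sum_Ico_split (f : ℤ → ℤ) {a b c : ℤ} (hab : a ≤ b) (hbc : b ≤ c) :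
    ∑ x ∈ Finset.Ico a c, f x = ∑ x ∈ Finset.Ico a b, f x + ∑ x ∈ Finset.Ico b c, f x := by
  rw [← Finset.Ico_union_Ico_eq_Ico hab hbc,
    Finset.sum_union (Finset.Ico_disjoint_Ico_consecutive a b c)]

lemma sum_Ioo_even (f : ℤ → ℤ) (k : ℕ) (hk : 0 < k) (hf : ∀ x, f (-x) = f x) :
    ∑ x ∈ Finset.Ioo (-(k:ℤ)) (k:ℤ), f x
      = 2 * ∑ x ∈ Finset.Ico (0:ℤ) (k:ℤ), f x - f 0 := by
  have h1 : Finset.Ioo (-(k:ℤ)) (k:ℤ) = Finset.Ico (1-(k:ℤ)) (k:ℤ) := by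
    ext x; simp only [Finset.mem_Ioo, Finset.mem_Ico]; omega
  have h2 := sum_Ico_split f (by omega : (1-(k:ℤ)) ≤ 0) (by positivity : (0:ℤ) ≤ k)
  have h3 : ∑ x ∈ Finset.Ico (1-(k:ℤ)) 0, f x = ∑ x ∈ Finset.Ico (1:ℤ) (k:ℤ), f x := by
    refine Finset.sum_nbij' (fun x => -x) (fun x => -x) ?_ ?_ ?_ ?_ ?_
    · intro a ha; simp_all [Finset.mem_Ico]; omega
    · intro a ha; simp_all [Finset.mem_Ico]; omega
    · intro a ha; simp
    · intro a ha; simp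
    · intro a ha; exact (hf a).symm
  have h4 := sum_Ico_split f (by omega : (0:ℤ) ≤ 1) (by omega : (1:ℤ) ≤ (k:ℤ))
  have h5 : ∑ x ∈ Finset.Ico (0:ℤ) 1, f x = f 0 := by
    have : Finset.Ico (0:ℤ) 1 = {0} := by ext x; simp [Finset.mem_Ico]; omega
    simp [this]
  rw [h1, h2, h3]
  omega

lemma MsumZ (k : ℕ) (hk : 0 < k) :
    ∑ x ∈ Finset.Ioo (-(k:ℤ)) (k:ℤ), (min 0 x + k) * (k - max 0 x) = (k:ℤ)^3 := by
  have hf : ∀ x : ℤ, (min 0 (-x) + k) * (k - max 0 (-x)) = (min 0 x + k) * (k - max 0 x) := by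
    intro x
    have h1 : min 0 (-x) = -max 0 x := by omega
    have h2 : max 0 (-x) = -min 0 x := by omega
    rw [h1, h2]; ring
  rw [sum_Ioo_even _ k hk hf]
  have hc : ∑ x ∈ Finset.Ico (0:ℤ) (k:ℤ), (min 0 x + k) * (k - max 0 x)
      = ∑ x ∈ Finset.Ico (0:ℤ) (k:ℤ), ((k:ℤ)*k - k*x) := by
    refine Finset.sum_congr rfl fun x hx => ?_
    simp only [Finset.mem_Ico] at hx
    have h1 : min 0 x = 0 := by omega
    have h2 : max 0 x = x := by omega
    rw [h1, h2]; ring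
  rw [hc, Finset.sum_sub_distrib, Finset.sum_const, ← Finset.mul_sum,
    sum_Ico_cast (fun x => x) k]
  have hcard : (Finset.Ico (0:ℤ) (k:ℤ)).card = k := by
    rw [Int.card_Ico]; omega
  rw [hcard]
  have := S1 k
  have h0 : min 0 (0:ℤ) = 0 := by omega
  have h0' : max 0 (0:ℤ) = 0 := by omega
  rw [h0, h0']
  push_cast
  linear_combination (-(k:ℤ)) * this

lemma LsumZ (k : ℕ) (hk : 0 < k) :
    3 * ∑ x ∈ Finset.Ioo (-(k:ℤ)) (k:ℤ), (min 0 x + k) * (k - max 0 x) * |x|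
      = (k:ℤ)^2 * ((k:ℤ)^2 - 1) := by
  have hf : ∀ x : ℤ, (min 0 (-x) + k) * (k - max 0 (-x)) * |(-x)|
      = (min 0 x + k) * (k - max 0 x) * |x| := by
    intro x
    have h1 : min 0 (-x) = -max 0 x := by omega
    have h2 : max 0 (-x) = -min 0 x := by omega
    rw [h1, h2, abs_neg]; ring
  rw [sum_Ioo_even _ k hk hf]
  have hc : ∑ x ∈ Finset.Ico (0:ℤ) (k:ℤ), (min 0 x + k) * (k - max 0 x) * |x|
      = ∑ x ∈ Finset.Ico (0:ℤ) (k:ℤ), ((k:ℤ)*k*x - k*x^2) := by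
    refine Finset.sum_congr rfl fun x hx => ?_
    simp only [Finset.mem_Ico] at hx
    have h1 : min 0 x = 0 := by omega
    have h2 : max 0 x = x := by omega
    rw [h1, h2, abs_of_nonneg hx.1]; ring
  rw [hc, Finset.sum_sub_distrib, ← Finset.mul_sum, ← Finset.mul_sum,
    sum_Ico_cast (fun x => x) k, sum_Ico_cast (fun x => x^2) k]
  have hS1 := S1 k
  have hS2 := S2 k
  simp only [abs_zero, mul_zero]
  linear_combination 3*(k:ℤ)^2 * hS1 - (k:ℤ) * hS2

/-- in the long-term average (β = 1) birth-death example with distortion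
`d(e) = |e|`, the pre-transmission quantities satisfy `L₀ = k(k²-1)/(6p)` and
`M₀ = k²/(2p)`, whence `D^{(k)}_1 = (k²-1)/(3k)` and `N^{(k)}_1 = 2p/k²`. -/
theorem stmt_12 (k : ℕ) (hk : 0 < k) (p : ℝ) (hp : p ∈ Set.Ioo (0 : ℝ) (1 / 3)) :
    IsUnit (1 - bdMat p k) ∧
    ((1 - bdMat p k)⁻¹ *ᵥ fun j : ↥(Finset.Ioo (-(k : ℤ)) (k : ℤ)) => ((|(j : ℤ)| : ℤ) : ℝ))
        ⟨0, by simp only [Finset.mem_Ioo]; omega⟩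
      = (k : ℝ) * ((k : ℝ) ^ 2 - 1) / (6 * p) ∧
    ((1 - bdMat p k)⁻¹ *ᵥ fun _ : ↥(Finset.Ioo (-(k : ℤ)) (k : ℤ)) => (1 : ℝ))
        ⟨0, by simp only [Finset.mem_Ioo]; omega⟩
      = (k : ℝ) ^ 2 / (2 * p) ∧
    (((1 - bdMat p k)⁻¹ *ᵥ fun j : ↥(Finset.Ioo (-(k : ℤ)) (k : ℤ)) => ((|(j : ℤ)| : ℤ) : ℝ))
        ⟨0, by simp only [Finset.mem_Ioo]; omega⟩)
      / (((1 - bdMat p k)⁻¹ *ᵥ fun _ : ↥(Finset.Ioo (-(k : ℤ)) (k : ℤ)) => (1 : ℝ))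
        ⟨0, by simp only [Finset.mem_Ioo]; omega⟩)
      = ((k : ℝ) ^ 2 - 1) / (3 * (k : ℝ)) ∧
    1 / (((1 - bdMat p k)⁻¹ *ᵥ fun _ : ↥(Finset.Ioo (-(k : ℤ)) (k : ℤ)) => (1 : ℝ))
        ⟨0, by simp only [Finset.mem_Ioo]; omega⟩)
      = 2 * p / (k : ℝ) ^ 2 := by
  obtain ⟨hp0, hp3⟩ := hp
  have hpne : p ≠ 0 := ne_of_gt hp0
  have hk0 : (k:ℝ) ≠ 0 := Nat.cast_ne_zero.mpr hk.ne'
  have hone := bd_mul_inv k hk p hpne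
  have hinv : (1 - bdMat p k)⁻¹ = bdInv p k := Matrix.inv_eq_right_inv hone
  have hunit : IsUnit (1 - bdMat p k) :=
    (Matrix.isUnit_iff_isUnit_det _).2 (Matrix.isUnit_det_of_right_inverse hone)
  have hL : ((1 - bdMat p k)⁻¹ *ᵥ fun j : ↥(Finset.Ioo (-(k : ℤ)) (k : ℤ)) =>
        ((|(j : ℤ)| : ℤ) : ℝ)) ⟨0, by simp only [Finset.mem_Ioo]; omega⟩
      = (k : ℝ) * ((k : ℝ) ^ 2 - 1) / (6 * p) := by
    rw [hinv]
    have h1 : (bdInv p k *ᵥ fun j : ↥(Finset.Ioo (-(k : ℤ)) (k : ℤ)) =>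
          ((|(j : ℤ)| : ℤ) : ℝ)) ⟨0, by simp only [Finset.mem_Ioo]; omega⟩
        = ∑ x ∈ Finset.Ioo (-(k:ℤ)) (k:ℤ),
            ((((min 0 x + k) * (k - max 0 x) * |x| : ℤ)) : ℝ) / (2*k*p) := by
      simp only [Matrix.mulVec, dotProduct]
      rw [← Finset.sum_coe_sort (Finset.Ioo (-(k:ℤ)) (k:ℤ))
        (fun x => ((((min 0 x + k) * (k - max 0 x) * |x| : ℤ)) : ℝ) / (2*k*p))]
      refine Finset.sum_congr rfl fun l _ => ?_
      show Gfun p k 0 (l:ℤ) * ((|(l:ℤ)| : ℤ) : ℝ) = _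
      unfold Gfun; push_cast; ring
    rw [h1, ← Finset.sum_div, ← Int.cast_sum]
    have hZ := LsumZ k hk
    have hcast : 3 * ((∑ x ∈ Finset.Ioo (-(k:ℤ)) (k:ℤ),
        (min 0 x + k) * (k - max 0 x) * |x| : ℤ) : ℝ)
        = (k:ℝ)^2 * ((k:ℝ)^2 - 1) := by exact_mod_cast hZ
    rw [div_eq_div_iff (by positivity) (by positivity)]
    linear_combination 2 * p * hcast
  have hM : ((1 - bdMat p k)⁻¹ *ᵥ fun _ : ↥(Finset.Ioo (-(k : ℤ)) (k : ℤ)) => (1:ℝ))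
        ⟨0, by simp only [Finset.mem_Ioo]; omega⟩
      = (k : ℝ) ^ 2 / (2 * p) := by
    rw [hinv]
    have h1 : (bdInv p k *ᵥ fun _ : ↥(Finset.Ioo (-(k : ℤ)) (k : ℤ)) => (1:ℝ))
          ⟨0, by simp only [Finset.mem_Ioo]; omega⟩
        = ∑ x ∈ Finset.Ioo (-(k:ℤ)) (k:ℤ),
            ((((min 0 x + k) * (k - max 0 x) : ℤ)) : ℝ) / (2*k*p) := by
      simp only [Matrix.mulVec, dotProduct]
      rw [← Finset.sum_coe_sort (Finset.Ioo (-(k:ℤ)) (k:ℤ))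
        (fun x => ((((min 0 x + k) * (k - max 0 x) : ℤ)) : ℝ) / (2*k*p))]
      refine Finset.sum_congr rfl fun l _ => ?_
      show Gfun p k 0 (l:ℤ) * 1 = _
      unfold Gfun; push_cast; ring
    rw [h1, ← Finset.sum_div, ← Int.cast_sum]
    have hZ := MsumZ k hk
    have hcast : ((∑ x ∈ Finset.Ioo (-(k:ℤ)) (k:ℤ),
        (min 0 x + k) * (k - max 0 x) : ℤ) : ℝ)
        = (k:ℝ)^3 := by exact_mod_cast hZ
    rw [hcast, div_eq_div_iff (by positivity) (by positivity)]
    ring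
  refine ⟨hunit, hL, hM, ?_, ?_⟩
  · rw [hL, hM]
    field_simp
    ring
  · rw [hM, one_div_div]
end
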